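/- Define φ_{n,m}(s²) = [ω^m (1 + |x|²)^(n − ρ_c)]|_{x = (s,0,…,0)} where ω is the Laplacian on ℝ^p and ρ_c = (q−1)/2. If n − ρ_c < −p/2 and m ≥ 1, then there exists a polynomial P of degree exactly m such that φ_{n,m}(s²) = P(s²)(1 + s²)^(n − 2m − ρ_c) for all s ∈ ℝ. -/

import Mathlib

open Real

/-- The Euclidean Laplacian on `ℝ^p`, as an operator on functions. -/
noncomputable def laplacianOp {p : ℕ} (f : (Fin p → ℝ) → ℝ) :
    (Fin p → ℝ) → ℝ :=
  fun x => ∑ i, iteratedDeriv 2 (fun t => f (Function.update x i t)) (x i)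

open Polynomial

noncomputable def Dop (μ : ℝ) (Q : Polynomial ℝ) : Polynomial ℝ :=
  Q.derivative * (1 + X) + C μ * Q

noncomputable def stepP (p : ℕ) (μ : ℝ) (Q : Polynomial ℝ) : Polynomial ℝ :=
  C (2 * (p:ℝ)) * Dop μ Q * (1 + X) + C 4 * X * Dop (μ - 1) (Dop μ Q)

noncomputable def gfun (μ : ℝ) (Q : Polynomial ℝ) (r : ℝ) : ℝ :=
  Q.eval r * (1 + r) ^ μ

lemma one_add_X_natDegree : ((1 + X : Polynomial ℝ)).natDegree = 1 := by
  have : (1 + X : Polynomial ℝ) = X + C 1 := by simp [add_comm]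
  rw [this, natDegree_X_add_C]

lemma natDegree_Dop (μ : ℝ) {Q : Polynomial ℝ} {d : ℕ} (h : Q.natDegree ≤ d) :
    (Dop μ Q).natDegree ≤ d := by
  unfold Dop
  apply natDegree_add_le_of_degree_le
  · by_cases h0 : Q.natDegree = 0
    · obtain ⟨c, rfl⟩ := natDegree_eq_zero.mp h0
      simp
    · have h2 := Polynomial.natDegree_derivative_lt h0
      calc (Q.derivative * (1+X)).natDegree
          ≤ Q.derivative.natDegree + (1+X : Polynomial ℝ).natDegree := natDegree_mul_le
        _ ≤ d := by rw [one_add_X_natDegree]; omega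
  · exact le_trans (natDegree_C_mul_le _ _) h

lemma coeff_Dop (μ : ℝ) {Q : Polynomial ℝ} {d : ℕ} (h : Q.natDegree ≤ d) :
    (Dop μ Q).coeff d = ((d : ℝ) + μ) * Q.coeff d := by
  unfold Dop
  rw [mul_add, mul_one, coeff_add, coeff_add, coeff_C_mul]
  have hd1 : Q.coeff (d+1) = 0 := coeff_eq_zero_of_natDegree_lt (by omega)
  rw [coeff_derivative, hd1]
  cases d with
  | zero => simp [Polynomial.mul_coeff_zero]
  | succ e =>
      rw [coeff_mul_X, coeff_derivative]
      push_cast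
      ring

lemma natDegree_stepP (p : ℕ) (μ : ℝ) {Q : Polynomial ℝ} {d : ℕ} (h : Q.natDegree ≤ d) :
    (stepP p μ Q).natDegree ≤ d + 1 := by
  unfold stepP
  apply natDegree_add_le_of_degree_le
  · calc (C (2*(p:ℝ)) * Dop μ Q * (1+X)).natDegree
        ≤ (C (2*(p:ℝ)) * Dop μ Q).natDegree + (1+X : Polynomial ℝ).natDegree :=
          natDegree_mul_le
      _ ≤ d + 1 := by
          rw [one_add_X_natDegree]
          have := le_trans (natDegree_C_mul_le (2*(p:ℝ)) (Dop μ Q)) (natDegree_Dop μ h)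
          omega
  · calc (C 4 * X * Dop (μ-1) (Dop μ Q)).natDegree
        ≤ (C 4 * X : Polynomial ℝ).natDegree + (Dop (μ-1) (Dop μ Q)).natDegree :=
          natDegree_mul_le
      _ ≤ d + 1 := by
          have h1 : (C 4 * X : Polynomial ℝ).natDegree ≤ 1 := by
            apply le_trans natDegree_mul_le; simp
          have h2 := natDegree_Dop (μ-1) (natDegree_Dop μ h)
          omega

lemma coeff_stepP (p : ℕ) (μ : ℝ) {Q : Polynomial ℝ} {d : ℕ} (h : Q.natDegree ≤ d) :
    (stepP p μ Q).coeff (d+1)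
      = (2*(p:ℝ)*((d:ℝ)+μ) + 4*((d:ℝ)+μ-1)*((d:ℝ)+μ)) * Q.coeff d := by
  unfold stepP
  rw [coeff_add, mul_assoc, coeff_C_mul, mul_add, mul_one, coeff_add, coeff_mul_X,
    mul_assoc (C (4:ℝ)) X, coeff_C_mul, coeff_X_mul]
  have hz : (Dop μ Q).coeff (d+1) = 0 :=
    coeff_eq_zero_of_natDegree_lt (lt_of_le_of_lt (natDegree_Dop μ h) (by omega))
  rw [hz, coeff_Dop μ h, coeff_Dop (μ-1) (natDegree_Dop μ h), coeff_Dop μ h]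
  ring

lemma rpow_shift {r : ℝ} (h : (0:ℝ) < 1 + r) (μ : ℝ) :
    (1 + r) ^ μ = (1 + r) ^ (μ - 1) * (1 + r) := by
  rw [← Real.rpow_add_one h.ne' (μ - 1)]
  congr 1; ring

lemma hasDerivAt_gfun (μ : ℝ) (Q : Polynomial ℝ) {r : ℝ} (hr : (-1:ℝ) < r) :
    HasDerivAt (gfun μ Q) (gfun (μ-1) (Dop μ Q) r) r := by
  have h1 : (0:ℝ) < 1 + r := by linarith
  have hpow : HasDerivAt (fun x : ℝ => (1 + x) ^ μ) (μ * (1 + r) ^ (μ - 1)) r := by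
    have h := (Real.hasDerivAt_rpow_const (x := 1 + r) (p := μ) (Or.inl h1.ne')).comp r
      ((hasDerivAt_id r).const_add 1)
    simpa [Function.comp_def] using h
  have hQ := Q.hasDerivAt r
  have h := hQ.mul hpow
  convert h using 1
  any_goals rfl
  unfold gfun Dop
  rw [rpow_shift h1 μ]
  simp [eval_mul, eval_add]
  ring

lemma lap_gfun (p : ℕ) (μ : ℝ) (Q : Polynomial ℝ) (x : Fin p → ℝ) :
    laplacianOp (fun y : Fin p → ℝ => gfun μ Q (∑ i, y i ^ 2)) x
      = gfun (μ - 2) (stepP p μ Q) (∑ i, x i ^ 2) := by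
  set r := ∑ i, x i ^ 2 with hr
  have hr0 : (0:ℝ) ≤ r := Finset.sum_nonneg fun i _ => sq_nonneg _
  have key : ∀ i : Fin p,
      iteratedDeriv 2 (fun t => gfun μ Q (∑ j, (Function.update x i t) j ^ 2)) (x i)
        = 2 * gfun (μ-1) (Dop μ Q) r
          + 4 * (x i)^2 * gfun (μ-2) (Dop (μ-1) (Dop μ Q)) r := by
    intro i
    set c : ℝ := ∑ j ∈ Finset.univ.erase i, x j ^ 2 with hc
    have hc0 : (0:ℝ) ≤ c := Finset.sum_nonneg fun j _ => sq_nonneg _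
    have hre : x i ^ 2 + c = r := by
      rw [hr, hc]; exact Finset.add_sum_erase Finset.univ (fun j => x j ^ 2) (Finset.mem_univ i)
    have hfun : (fun t => gfun μ Q (∑ j, (Function.update x i t) j ^ 2))
        = fun t => gfun μ Q (t^2 + c) := by
      funext t
      congr 1
      have hupd : ∀ j, (Function.update x i t) j ^ 2
          = Function.update (fun j => x j ^ 2) i (t^2) j := by
        intro j
        by_cases h : j = i
        · subst h; simp
        · simp [Function.update_of_ne h]
      rw [Finset.sum_congr rfl (fun j _ => hupd j),
        Finset.sum_update_of_mem (Finset.mem_univ i), Finset.sdiff_singleton_eq_erase]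
    rw [hfun]
    have hG1 : ∀ t : ℝ, HasDerivAt (fun t => gfun μ Q (t^2+c))
        (2 * t * gfun (μ-1) (Dop μ Q) (t^2+c)) t := by
      intro t
      have hin : HasDerivAt (fun t : ℝ => t^2 + c) (2*t) t := by
        simpa using (hasDerivAt_pow 2 t).add_const c
      have hout := hasDerivAt_gfun μ Q (show (-1:ℝ) < t^2 + c by nlinarith [sq_nonneg t])
      have h := hout.comp t hin
      simpa [mul_comm, Function.comp_def] using h
    have hd1 : deriv (fun t => gfun μ Q (t^2+c))
        = fun t => 2 * t * gfun (μ-1) (Dop μ Q) (t^2+c) :=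
      funext fun t => (hG1 t).deriv
    have hG2 : HasDerivAt (fun t => 2 * t * gfun (μ-1) (Dop μ Q) (t^2+c))
        (2 * gfun (μ-1) (Dop μ Q) r
          + 4 * (x i)^2 * gfun (μ-2) (Dop (μ-1) (Dop μ Q)) r) (x i) := by
      have hlin : HasDerivAt (fun t : ℝ => 2 * t) 2 (x i) := by
        simpa using (hasDerivAt_id (x i)).const_mul (2:ℝ)
      have hin : HasDerivAt (fun t : ℝ => t^2 + c) (2*(x i)) (x i) := by
        simpa using (hasDerivAt_pow 2 (x i)).add_const c
      have hout := hasDerivAt_gfun (μ-1) (Dop μ Q)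
        (show (-1:ℝ) < (x i)^2 + c by nlinarith [sq_nonneg (x i)])
      have hcomp := hout.comp (x i) hin
      have h := hlin.mul hcomp
      simp only [Function.comp] at h
      rw [hre] at h
      have heq : μ - 1 - 1 = μ - 2 := by ring
      rw [heq] at h
      convert h using 1
      any_goals rfl
      ring
    rw [iteratedDeriv_succ, iteratedDeriv_one, hd1, ← hre]
    rw [hre]
    exact hG2.deriv
  unfold laplacianOp
  rw [Finset.sum_congr rfl (fun i _ => key i), Finset.sum_add_distrib,
    Finset.sum_const, ← Finset.sum_mul, ← Finset.mul_sum]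
  have hcard : (Finset.univ : Finset (Fin p)).card = p := by simp
  rw [hcard]
  have h1r : (0:ℝ) < 1 + r := by linarith
  unfold gfun stepP
  simp only [eval_add, eval_mul, eval_C, eval_X, eval_one]
  rw [rpow_shift h1r (μ - 1)]
  have : μ - 1 - 1 = μ - 2 := by ring
  rw [this]
  ring

noncomputable def Qseq (p : ℕ) (ν : ℝ) : ℕ → Polynomial ℝ
  | 0 => 1
  | k+1 => stepP p (ν - 2*(k:ℝ)) (Qseq p ν k)

lemma Qseq_natDegree_le (p : ℕ) (ν : ℝ) : ∀ k, (Qseq p ν k).natDegree ≤ k := by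
  intro k
  induction k with
  | zero => simp [Qseq]
  | succ k ih => exact natDegree_stepP p _ ih

lemma Qseq_coeff_ne (p : ℕ) {ν : ℝ} (hν : ν < -(p:ℝ)/2) (hp : 1 ≤ p) :
    ∀ k, (Qseq p ν k).coeff k ≠ 0 := by
  intro k
  induction k with
  | zero => simp [Qseq]
  | succ k ih =>
    rw [show Qseq p ν (k+1) = stepP p (ν - 2*(k:ℝ)) (Qseq p ν k) from rfl,
      coeff_stepP p _ (Qseq_natDegree_le p ν k)]
    apply mul_ne_zero _ ih
    set a : ℝ := (k:ℝ) + (ν - 2*(k:ℝ)) with ha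
    have h1 : a < 0 := by
      have hp1 : (1:ℝ) ≤ (p:ℝ) := by exact_mod_cast hp
      have : (0:ℝ) ≤ (k:ℝ) := Nat.cast_nonneg k
      rw [ha]; nlinarith
    have h2 : (p:ℝ) + 2*a - 2 < 0 := by
      have : (0:ℝ) ≤ (k:ℝ) := Nat.cast_nonneg k
      rw [ha]; nlinarith
    have hpos : 0 < (-a) * (-(((p:ℝ) + 2*a - 2))) :=
      mul_pos (by linarith) (by linarith)
    intro hcontra
    nlinarith

lemma iterate_lap (p : ℕ) (ν : ℝ) (k : ℕ) :
    laplacianOp^[k] (fun x : Fin p → ℝ => gfun ν 1 (∑ i, x i ^ 2))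
      = fun x => gfun (ν - 2*(k:ℝ)) (Qseq p ν k) (∑ i, x i ^ 2) := by
  induction k with
  | zero => simp [Qseq]
  | succ k ih =>
    rw [Function.iterate_succ_apply', ih]
    funext x
    rw [lap_gfun p (ν - 2*(k:ℝ)) (Qseq p ν k) x]
    rw [show Qseq p ν (k+1) = stepP p (ν - 2*(k:ℝ)) (Qseq p ν k) from rfl]
    congr 1
    push_cast
    ring

/-- with `ρ_c = (q-1)/2` and `φ_{n,m}(s²) = ω^m(1+|x|²)^(n-ρ_c)`
evaluated at `x = (s,0,…,0)`, if `n - ρ_c < -p/2` and `m ≥ 1` there is a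
polynomial `P` of degree exactly `m` with
`φ_{n,m}(s²) = P(s²)(1+s²)^(n-2m-ρ_c)` for all `s ∈ ℝ`. -/
theorem iterated_laplacian_form (p q n m : ℕ) (hp : 1 ≤ p) (hq : 1 ≤ q)
    (hn : 1 ≤ n) (hm : 1 ≤ m)
    (hcond : (n : ℝ) - ((q : ℝ) - 1) / 2 < -(p : ℝ) / 2) :
    ∃ P : Polynomial ℝ, P.natDegree = m ∧ P ≠ 0 ∧
      ∀ s : ℝ,
        (laplacianOp^[m]
            (fun x : Fin p → ℝ =>
              (1 + ∑ i, x i ^ 2) ^ ((n : ℝ) - ((q : ℝ) - 1) / 2)))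
          (fun i => if (i : ℕ) = 0 then s else 0)
        = P.eval (s ^ 2) *
            (1 + s ^ 2) ^ ((n : ℝ) - 2 * (m : ℝ) - ((q : ℝ) - 1) / 2) := by
  set ν : ℝ := (n : ℝ) - ((q : ℝ) - 1) / 2 with hν
  have hcoeff := Qseq_coeff_ne p (ν := ν) hcond hp m
  refine ⟨Qseq p ν m, ?_, ?_, ?_⟩
  · exact le_antisymm (Qseq_natDegree_le p ν m) (le_natDegree_of_ne_zero hcoeff)
  · intro h; exact hcoeff (by simp [h])
  · intro s
    have hfun : (fun x : Fin p → ℝ => (1 + ∑ i, x i ^ 2) ^ ν)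
        = fun x : Fin p → ℝ => gfun ν 1 (∑ i, x i ^ 2) := by
      funext x; simp [gfun]
    rw [hfun, iterate_lap p ν m]
    haveI : NeZero p := ⟨by omega⟩
    have hs : ∑ i : Fin p, (if (i:ℕ) = 0 then s else 0) ^ 2 = s ^ 2 := by
      rw [Finset.sum_eq_single (0 : Fin p)]
      · simp
      · intro i _ hi
        rw [if_neg (fun h => hi (Fin.ext (by simp [h])))]
        ring
      · simp
    show gfun (ν - 2 * (m:ℝ)) (Qseq p ν m)
        (∑ i : Fin p, (if (i:ℕ) = 0 then s else 0) ^ 2) = _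
    rw [hs]
    unfold gfun
    congr 1
    rw [hν]
    ring
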